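/- arXiv:2308.01490 — 3 statements merged into one kernel-verified Lean document; each statement's English description precedes it below -/
import Mathlib

section
/- Let X_1, ..., X_n be {0,1}-valued random variables forming a sequence such that for each i and any values x_1,...,x_i, P(X_{i+1} = 1 | X_1 = x_1, ..., X_i = x_i) ≥ p. Then for any real λ > 0, E[exp(-λ ∑_{i=1}^n X_i)] ≤ (p e^{-λ} + 1 - p)^n. -/
open MeasureTheory

/-- Extension of the Chernoff MGF bound to sequentially dependent {0,1}-valued
random variables: if the conditional probability that `X (i+1) = 1` given any
history of values of `X 0, ..., X i` is at least `p`, then for any `λ > 0`,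
`E[exp (-λ ∑ X i)] ≤ (p e^{-λ} + 1 - p)^n`. -/
theorem stmt0 {Ω : Type*} [MeasurableSpace Ω] (μ : Measure Ω) [IsProbabilityMeasure μ]
    (n : ℕ) (X : ℕ → Ω → ℝ) (hX : ∀ i, Measurable (X i))
    (hval : ∀ i ω, X i ω = 0 ∨ X i ω = 1)
    (p : ℝ) (hp0 : 0 ≤ p) (hp1 : p ≤ 1)
    (hcond : ∀ i, i < n → ∀ x : ℕ → ℝ,
      ENNReal.ofReal p * μ {ω | ∀ j < i, X j ω = x j}
        ≤ μ ({ω | X i ω = 1} ∩ {ω | ∀ j < i, X j ω = x j}))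
    (lam : ℝ) (hlam : 0 < lam) :
    ∫ ω, Real.exp (-lam * ∑ i ∈ Finset.range n, X i ω) ∂μ
      ≤ (p * Real.exp (-lam) + 1 - p) ^ n := by
  set q := p * Real.exp (-lam) + 1 - p with hq
  set e := Real.exp (-lam) with he
  have hepos : 0 < e := Real.exp_pos _
  have hele : e ≤ 1 := by
    rw [he, Real.exp_le_one_iff]; linarith
  have hq0 : 0 ≤ q := by nlinarith
  have hXnn : ∀ i ω, 0 ≤ X i ω := fun i ω => by rcases hval i ω with h | h <;> simp [h]
  have hAmeas : ∀ (m : ℕ) (x : ℕ → ℝ), MeasurableSet {ω | ∀ j < m, X j ω = x j} := by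
    intro m x
    have : {ω | ∀ j < m, X j ω = x j} = ⋂ j ∈ Finset.range m, (X j) ⁻¹' {x j} := by
      ext ω; simp [Finset.mem_range]
    rw [this]
    exact Finset.measurableSet_biInter _ fun j _ => (hX j) (measurableSet_singleton _)
  have hint : ∀ (s : Finset ℕ), Integrable (fun ω => Real.exp (-lam * ∑ i ∈ s, X i ω)) μ := by
    intro s
    have hm : Measurable fun ω => Real.exp (-lam * ∑ i ∈ s, X i ω) :=
      Real.measurable_exp.comp (measurable_const.mul (Finset.measurable_sum s fun i _ => hX i))
    refine ⟨hm.aestronglyMeasurable, ?_⟩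
    apply HasFiniteIntegral.of_bounded (C := (1 : ℝ))
    filter_upwards with ω
    rw [Real.norm_eq_abs, abs_of_pos (Real.exp_pos _)]
    rw [Real.exp_le_one_iff]
    have : 0 ≤ ∑ i ∈ s, X i ω := Finset.sum_nonneg fun i _ => hXnn i ω
    nlinarith
  have key : ∀ k m, m + k = n → ∀ x : ℕ → ℝ,
      ∫ ω in {ω | ∀ j < m, X j ω = x j},
          Real.exp (-lam * ∑ i ∈ Finset.Ico m n, X i ω) ∂μ
        ≤ q ^ k * (μ {ω | ∀ j < m, X j ω = x j}).toReal := by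
    intro k
    induction k with
    | zero =>
      intro m hm x
      obtain rfl : m = n := by omega
      simp [Finset.Ico_self, Measure.real]
    | succ k ih =>
      intro m hmk x
      have hm : m < n := by omega
      set x0 := Function.update x m 0 with hx0
      set x1 := Function.update x m 1 with hx1
      set A := {ω | ∀ j < m, X j ω = x j} with hA
      set A0 := {ω | ∀ j < m + 1, X j ω = x0 j} with hA0def
      set A1 := {ω | ∀ j < m + 1, X j ω = x1 j} with hA1def
      have hAb : ∀ (b : ℝ), {ω | ∀ j < m + 1, X j ω = Function.update x m b j}
          = A ∩ {ω | X m ω = b} := by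
        intro b
        ext ω
        constructor
        · intro h
          refine ⟨fun j hj => ?_, ?_⟩
          · have := h j (by omega)
            rwa [Function.update_of_ne (by omega)] at this
          · have := h m (by omega)
            rwa [Function.update_self] at this
        · rintro ⟨h1, h2⟩ j hj
          rcases Nat.lt_succ_iff_lt_or_eq.mp hj with hj' | rfl
          · rw [Function.update_of_ne (by omega)]; exact h1 j hj'
          · rw [Function.update_self]; exact h2
      have hA0 : A0 = A ∩ {ω | X m ω = 0} := hAb 0
      have hA1 : A1 = A ∩ {ω | X m ω = 1} := hAb 1
      have hunion : A = A0 ∪ A1 := by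
        rw [hA0, hA1]
        ext ω
        constructor
        · intro h
          rcases hval m ω with h0 | h1
          · exact Or.inl ⟨h, h0⟩
          · exact Or.inr ⟨h, h1⟩
        · rintro (⟨h, _⟩ | ⟨h, _⟩) <;> exact h
      have hdisj : Disjoint A0 A1 := by
        rw [hA0, hA1, Set.disjoint_left]
        rintro ω ⟨_, h0⟩ ⟨_, h1⟩
        simp only [Set.mem_setOf_eq] at h0 h1
        rw [h0] at h1; norm_num at h1
      have mA0 : MeasurableSet A0 := hAmeas (m + 1) x0
      have mA1 : MeasurableSet A1 := hAmeas (m + 1) x1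
      have hsum : ∀ ω, ∑ i ∈ Finset.Ico m n, X i ω
          = X m ω + ∑ i ∈ Finset.Ico (m + 1) n, X i ω := fun ω =>
        Finset.sum_eq_sum_Ico_succ_bot hm _
      -- split the integral
      have hsplit : ∫ ω in A, Real.exp (-lam * ∑ i ∈ Finset.Ico m n, X i ω) ∂μ
          = ∫ ω in A0, Real.exp (-lam * ∑ i ∈ Finset.Ico m n, X i ω) ∂μ
            + ∫ ω in A1, Real.exp (-lam * ∑ i ∈ Finset.Ico m n, X i ω) ∂μ := by
        rw [hunion]
        exact setIntegral_union hdisj mA1 (hint _).integrableOn (hint _).integrableOn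
      have hI0 : ∫ ω in A0, Real.exp (-lam * ∑ i ∈ Finset.Ico m n, X i ω) ∂μ
          = ∫ ω in A0, Real.exp (-lam * ∑ i ∈ Finset.Ico (m + 1) n, X i ω) ∂μ := by
        apply setIntegral_congr_fun mA0
        intro ω hω
        rw [hA0] at hω
        have h0 : X m ω = 0 := hω.2
        simp only
        rw [hsum ω, h0, zero_add]
      have hI1 : ∫ ω in A1, Real.exp (-lam * ∑ i ∈ Finset.Ico m n, X i ω) ∂μ
          = e * ∫ ω in A1, Real.exp (-lam * ∑ i ∈ Finset.Ico (m + 1) n, X i ω) ∂μ := by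
        rw [← integral_const_mul]
        apply setIntegral_congr_fun mA1
        intro ω hω
        rw [hA1] at hω
        have h1 : X m ω = 1 := hω.2
        simp only
        rw [hsum ω, h1, he, ← Real.exp_add]
        ring_nf
      have ih0 := ih (m + 1) (by omega) x0
      have ih1 := ih (m + 1) (by omega) x1
      rw [← hA0def] at ih0
      rw [← hA1def] at ih1
      -- measure additivity
      have hmeas_add : (μ A).toReal = (μ A0).toReal + (μ A1).toReal := by
        rw [hunion, measure_union hdisj mA1, ENNReal.toReal_add (measure_ne_top μ _) (measure_ne_top μ _)]
      -- conditional bound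
      have hp' : p * (μ A).toReal ≤ (μ A1).toReal := by
        have h := hcond m hm x
        have hset : {ω | X m ω = 1} ∩ A = A1 := by rw [hA1, Set.inter_comm]
        rw [hset] at h
        have h2 := ENNReal.toReal_mono (measure_ne_top μ _) h
        rwa [ENNReal.toReal_mul, ENNReal.toReal_ofReal hp0] at h2
      set I0 := ∫ ω in A0, Real.exp (-lam * ∑ i ∈ Finset.Ico (m + 1) n, X i ω) ∂μ
      set I1 := ∫ ω in A1, Real.exp (-lam * ∑ i ∈ Finset.Ico (m + 1) n, X i ω) ∂μ
      rw [hsplit, hI0, hI1]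
      set μ0 := (μ A0).toReal
      set μ1 := (μ A1).toReal
      have hμ0 : 0 ≤ μ0 := ENNReal.toReal_nonneg
      have hμ1 : 0 ≤ μ1 := ENNReal.toReal_nonneg
      have hp'' : p * (μ0 + μ1) ≤ μ1 := by rw [← hmeas_add]; exact hp'
      have hqk : 0 ≤ q ^ k := pow_nonneg hq0 k
      calc I0 + e * I1 ≤ q ^ k * μ0 + e * (q ^ k * μ1) :=
            add_le_add ih0 (mul_le_mul_of_nonneg_left ih1 hepos.le)
        _ = q ^ k * (μ0 + e * μ1) := by ring
        _ ≤ q ^ k * (q * (μ0 + μ1)) := by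
            apply mul_le_mul_of_nonneg_left _ hqk
            nlinarith [mul_le_mul_of_nonneg_left hp'' (by linarith : (0:ℝ) ≤ 1 - e)]
        _ ≤ q ^ (k + 1) * (μ A).toReal := by
            rw [hmeas_add, pow_succ]; ring_nf; exact le_refl _
  have h := key n 0 (by omega) (fun _ => 0)
  have huniv : {ω : Ω | ∀ j < 0, X j ω = (fun _ => (0:ℝ)) j} = Set.univ := by
    ext ω; simp
  rw [huniv] at h
  simp only [Measure.restrict_univ, measure_univ, ENNReal.toReal_one, mul_one] at h
  rwa [← Finset.range_eq_Ico] at h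
end

section
/- Let X_1, ..., X_n be {0,1}-valued random variables such that P(X_{i+1} = 1 | X_1, ..., X_i) ≥ p almost surely for every i. Then for any integer k with k ≤ np, P(∑_{i=1}^n X_i < k) ≤ e^{-np} (e n p / k)^k. -/
open MeasureTheory

open scoped ENNReal

lemma measH {Ω : Type*} [MeasurableSpace Ω] (X : ℕ → Ω → ℝ)
    (hX : ∀ i, Measurable (X i)) (i : ℕ) (x : ℕ → ℝ) :
    MeasurableSet {ω | ∀ j < i, X j ω = x j} := by
  have : {ω | ∀ j < i, X j ω = x j} = ⋂ j, ⋂ (_ : j < i), (X j) ⁻¹' {x j} := by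
    ext ω; simp [Set.mem_iInter]
  rw [this]
  exact MeasurableSet.iInter fun j => MeasurableSet.iInter fun _ => hX j (measurableSet_singleton _)

lemma ennreal_step (p t : ℝ) (hp0 : 0 < p) (hp1 : p ≤ 1) (ht : 0 ≤ t)
    (a b : ℝ≥0∞) (ha : a ≠ ⊤) (hb : b ≠ ⊤)
    (h : ENNReal.ofReal p * (a + b) ≤ a) :
    ENNReal.ofReal (Real.exp (-t)) * a + b
      ≤ ENNReal.ofReal (1 - (1 - Real.exp (-t)) * p) * (a + b) := by
  have hs1 : Real.exp (-t) ≤ 1 := Real.exp_le_one_iff.mpr (by linarith)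
  have hs0 : 0 ≤ Real.exp (-t) := (Real.exp_pos _).le
  have hq0 : 0 ≤ 1 - (1 - Real.exp (-t)) * p := by nlinarith
  have hA : (0:ℝ) ≤ a.toReal := ENNReal.toReal_nonneg
  have hB : (0:ℝ) ≤ b.toReal := ENNReal.toReal_nonneg
  have hreal : p * (a.toReal + b.toReal) ≤ a.toReal := by
    have := ENNReal.toReal_mono ha h
    rwa [ENNReal.toReal_mul, ENNReal.toReal_ofReal hp0.le, ENNReal.toReal_add ha hb] at this
  calc ENNReal.ofReal (Real.exp (-t)) * a + b
      = ENNReal.ofReal (Real.exp (-t) * a.toReal + b.toReal) := by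
        rw [ENNReal.ofReal_add (by positivity) hB, ENNReal.ofReal_mul hs0,
          ENNReal.ofReal_toReal ha, ENNReal.ofReal_toReal hb]
    _ ≤ ENNReal.ofReal ((1 - (1 - Real.exp (-t)) * p) * (a.toReal + b.toReal)) := by
        apply ENNReal.ofReal_le_ofReal; nlinarith
    _ = ENNReal.ofReal (1 - (1 - Real.exp (-t)) * p) * (a + b) := by
        rw [ENNReal.ofReal_mul hq0, ENNReal.ofReal_add hA hB,
          ENNReal.ofReal_toReal ha, ENNReal.ofReal_toReal hb]

lemma key {Ω : Type*} [MeasurableSpace Ω] (μ : Measure Ω) [IsProbabilityMeasure μ]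
    (n : ℕ) (X : ℕ → Ω → ℝ) (hX : ∀ i, Measurable (X i))
    (hval : ∀ i ω, X i ω = 0 ∨ X i ω = 1)
    (p t : ℝ) (hp0 : 0 < p) (hp1 : p ≤ 1) (ht : 0 ≤ t)
    (hcond : ∀ i, i < n → ∀ x : ℕ → ℝ,
      ENNReal.ofReal p * μ {ω | ∀ j < i, X j ω = x j}
        ≤ μ ({ω | X i ω = 1} ∩ {ω | ∀ j < i, X j ω = x j})) :
    ∀ m i, i + m ≤ n → ∀ x : ℕ → ℝ,
      ∫⁻ ω in {ω | ∀ j < i, X j ω = x j},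
          ∏ j ∈ Finset.range m, ENNReal.ofReal (Real.exp (-t * X (i + j) ω)) ∂μ
        ≤ ENNReal.ofReal (1 - (1 - Real.exp (-t)) * p) ^ m
            * μ {ω | ∀ j < i, X j ω = x j} := by
  intro m
  induction m with
  | zero => intro i _ x; simp
  | succ m ih =>
    intro i hin x
    set q : ℝ := 1 - (1 - Real.exp (-t)) * p with hq
    set H : Set Ω := {ω | ∀ j < i, X j ω = x j} with hHdef
    set H1 : Set Ω := {ω | ∀ j < i + 1, X j ω = Function.update x i 1 j} with hH1def
    set H0 : Set Ω := {ω | ∀ j < i + 1, X j ω = Function.update x i 0 j} with hH0def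
    have hH1 : H1 = H ∩ {ω | X i ω = 1} := by
      ext ω
      simp only [hH1def, hHdef, Set.mem_setOf_eq, Set.mem_inter_iff]
      constructor
      · intro h
        refine ⟨fun j hj => ?_, ?_⟩
        · have := h j (by omega); rwa [Function.update_of_ne (by omega)] at this
        · have := h i (by omega); rwa [Function.update_self] at this
      · rintro ⟨h1, h2⟩ j hj
        rcases Nat.lt_succ_iff_lt_or_eq.mp hj with hj' | rfl
        · rw [Function.update_of_ne (by omega)]; exact h1 j hj'
        · rwa [Function.update_self]
    have hH0 : H0 = H ∩ {ω | X i ω = 0} := by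
      ext ω
      simp only [hH0def, hHdef, Set.mem_setOf_eq, Set.mem_inter_iff]
      constructor
      · intro h
        refine ⟨fun j hj => ?_, ?_⟩
        · have := h j (by omega); rwa [Function.update_of_ne (by omega)] at this
        · have := h i (by omega); rwa [Function.update_self] at this
      · rintro ⟨h1, h2⟩ j hj
        rcases Nat.lt_succ_iff_lt_or_eq.mp hj with hj' | rfl
        · rw [Function.update_of_ne (by omega)]; exact h1 j hj'
        · rwa [Function.update_self]
    have hmH : MeasurableSet H := measH X hX i x
    have hmH1 : MeasurableSet H1 := measH X hX (i+1) _
    have hmH0 : MeasurableSet H0 := measH X hX (i+1) _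
    have hdisj : Disjoint H1 H0 := by
      rw [hH1, hH0, Set.disjoint_left]
      rintro ω ⟨-, h1⟩ ⟨-, h0⟩
      simp only [Set.mem_setOf_eq] at h1 h0
      rw [h1] at h0; norm_num at h0
    have hunion : H = H1 ∪ H0 := by
      rw [hH1, hH0]
      ext ω
      constructor
      · intro hω
        rcases hval i ω with h | h
        · exact Or.inr ⟨hω, h⟩
        · exact Or.inl ⟨hω, h⟩
      · rintro (⟨h, -⟩ | ⟨h, -⟩) <;> exact h
    have hμH : μ H = μ H1 + μ H0 := by
      rw [hunion]; exact measure_union hdisj hmH0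
    -- measurability of the tail product
    have hmeasF : ∀ (l i' : ℕ), Measurable fun ω =>
        ∏ j ∈ Finset.range l, ENNReal.ofReal (Real.exp (-t * X (i' + j) ω)) := by
      intro l i'
      apply Finset.measurable_prod
      intro j _
      exact ENNReal.measurable_ofReal.comp (Real.measurable_exp.comp ((hX (i' + j)).const_mul (-t)))
    -- rewrite the product
    have hprod : ∀ ω, ∏ j ∈ Finset.range (m + 1), ENNReal.ofReal (Real.exp (-t * X (i + j) ω))
        = (∏ j ∈ Finset.range m, ENNReal.ofReal (Real.exp (-t * X ((i+1) + j) ω)))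
          * ENNReal.ofReal (Real.exp (-t * X i ω)) := by
      intro ω
      rw [Finset.prod_range_succ']
      rw [add_zero]
      congr 1
      apply Finset.prod_congr rfl
      intro j _
      have hje : i + (j + 1) = i + 1 + j := by omega
      rw [hje]
    have hιn : i + 1 + m ≤ n := by omega
    have ihH1 := ih (i + 1) hιn (Function.update x i 1)
    have ihH0 := ih (i + 1) hιn (Function.update x i 0)
    rw [← hH1def] at ihH1
    rw [← hH0def] at ihH0
    -- split the integral
    have hsplit : ∫⁻ ω in H, ∏ j ∈ Finset.range (m + 1),
          ENNReal.ofReal (Real.exp (-t * X (i + j) ω)) ∂μ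
        = (∫⁻ ω in H1, ∏ j ∈ Finset.range (m + 1),
            ENNReal.ofReal (Real.exp (-t * X (i + j) ω)) ∂μ)
          + ∫⁻ ω in H0, ∏ j ∈ Finset.range (m + 1),
            ENNReal.ofReal (Real.exp (-t * X (i + j) ω)) ∂μ := by
      rw [hunion, lintegral_union hmH0 hdisj]
    have hint1 : ∫⁻ ω in H1, ∏ j ∈ Finset.range (m + 1),
          ENNReal.ofReal (Real.exp (-t * X (i + j) ω)) ∂μ
        = ENNReal.ofReal (Real.exp (-t)) * ∫⁻ ω in H1,
            ∏ j ∈ Finset.range m, ENNReal.ofReal (Real.exp (-t * X ((i+1) + j) ω)) ∂μ := by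
      rw [← lintegral_const_mul' _ _ ENNReal.ofReal_ne_top]
      apply setLIntegral_congr_fun hmH1
      intro ω hω
      beta_reduce
      rw [hprod ω]
      have hXi : X i ω = 1 := by
        have := hω i (by omega); rwa [Function.update_self] at this
      rw [hXi, mul_comm]
      norm_num
    have hint0 : ∫⁻ ω in H0, ∏ j ∈ Finset.range (m + 1),
          ENNReal.ofReal (Real.exp (-t * X (i + j) ω)) ∂μ
        = ∫⁻ ω in H0,
            ∏ j ∈ Finset.range m, ENNReal.ofReal (Real.exp (-t * X ((i+1) + j) ω)) ∂μ := by
      apply setLIntegral_congr_fun hmH0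
      intro ω hω
      beta_reduce
      rw [hprod ω]
      have hXi : X i ω = 0 := by
        have := hω i (by omega); rwa [Function.update_self] at this
      rw [hXi]
      norm_num
    have hcondi : ENNReal.ofReal p * (μ H1 + μ H0) ≤ μ H1 := by
      rw [← hμH, hH1, Set.inter_comm]
      exact hcond i (by omega) x
    have hstep := ennreal_step p t hp0 hp1 ht (μ H1) (μ H0)
      (measure_ne_top μ H1) (measure_ne_top μ H0) hcondi
    calc ∫⁻ ω in H, ∏ j ∈ Finset.range (m + 1),
          ENNReal.ofReal (Real.exp (-t * X (i + j) ω)) ∂μ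
        = ENNReal.ofReal (Real.exp (-t)) * (∫⁻ ω in H1,
            ∏ j ∈ Finset.range m, ENNReal.ofReal (Real.exp (-t * X ((i+1) + j) ω)) ∂μ)
          + ∫⁻ ω in H0,
            ∏ j ∈ Finset.range m, ENNReal.ofReal (Real.exp (-t * X ((i+1) + j) ω)) ∂μ := by
          rw [hsplit, hint1, hint0]
      _ ≤ ENNReal.ofReal (Real.exp (-t)) * (ENNReal.ofReal q ^ m * μ H1)
          + ENNReal.ofReal q ^ m * μ H0 := by
          gcongr
      _ = ENNReal.ofReal q ^ m * (ENNReal.ofReal (Real.exp (-t)) * μ H1 + μ H0) := by ring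
      _ ≤ ENNReal.ofReal q ^ m * (ENNReal.ofReal q * (μ H1 + μ H0)) := by
          gcongr
      _ = ENNReal.ofReal q ^ (m + 1) * μ H := by
          rw [hμH]; ring

/-- Extension of the Chernoff lower-tail bound to sequentially dependent
{0,1}-valued random variables: if the conditional probability that
`X (i+1) = 1` given any history of values of `X 0, ..., X i` is at least `p`,
then for any integer `k ≤ n p`, `P(∑ X i < k) ≤ e^{-np} (e n p / k)^k`. -/
theorem stmt1 {Ω : Type*} [MeasurableSpace Ω] (μ : Measure Ω) [IsProbabilityMeasure μ]
    (n : ℕ) (X : ℕ → Ω → ℝ) (hX : ∀ i, Measurable (X i))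
    (hval : ∀ i ω, X i ω = 0 ∨ X i ω = 1)
    (p : ℝ) (hp0 : 0 < p) (hp1 : p ≤ 1)
    (hcond : ∀ i, i < n → ∀ x : ℕ → ℝ,
      ENNReal.ofReal p * μ {ω | ∀ j < i, X j ω = x j}
        ≤ μ ({ω | X i ω = 1} ∩ {ω | ∀ j < i, X j ω = x j}))
    (k : ℕ) (hk : (k : ℝ) ≤ n * p) :
    μ {ω | ∑ i ∈ Finset.range n, X i ω < (k : ℝ)}
      ≤ ENNReal.ofReal (Real.exp (-(n : ℝ) * p) * (Real.exp 1 * n * p / k) ^ k) := by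
  rcases Nat.eq_zero_or_pos k with rfl | hk1
  · have hempty : {ω | ∑ i ∈ Finset.range n, X i ω < ((0:ℕ):ℝ)} = ∅ := by
      ext ω
      simp only [Set.mem_setOf_eq, Set.mem_empty_iff_false, iff_false, not_lt, Nat.cast_zero]
      exact Finset.sum_nonneg fun i _ => by rcases hval i ω with h | h <;> simp [h]
    rw [hempty]
    simp
  · have hk0 : (0:ℝ) < k := Nat.cast_pos.mpr hk1
    have hnp : (0:ℝ) < n * p := lt_of_lt_of_le hk0 hk
    have hz : (0:ℝ) < n * p / k := by positivity
    have hz1 : (1:ℝ) ≤ n * p / k := (one_le_div hk0).mpr hk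
    have hn : (0:ℝ) < n := by
      rcases Nat.eq_zero_or_pos n with rfl | h
      · exfalso; simp at hnp
      · exact_mod_cast h
    set t : ℝ := Real.log (n * p / k) with htdef
    have ht : 0 ≤ t := Real.log_nonneg hz1
    have hexpt : Real.exp t = n * p / k := Real.exp_log hz
    have hexpnt : Real.exp (-t) = k / (n * p) := by
      rw [Real.exp_neg, hexpt, inv_div]
    set q : ℝ := 1 - (1 - Real.exp (-t)) * p with hqdef
    have hqval : q = 1 - p + k / n := by
      rw [hqdef, hexpnt]
      field_simp
      ring
    have hq0 : 0 ≤ q := by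
      rw [hqval]
      have : (0:ℝ) ≤ (k:ℝ) / n := by positivity
      linarith
    have huniv : {ω : Ω | ∀ j < (0:ℕ), X j ω = (fun _ => (0:ℝ)) j} = Set.univ := by
      ext ω; simp
    have hbound := key μ n X hX hval p t hp0 hp1 ht hcond n 0 (by omega) (fun _ => 0)
    rw [huniv, Measure.restrict_univ, measure_univ, mul_one] at hbound
    set F : Ω → ℝ≥0∞ := fun ω =>
      ∏ j ∈ Finset.range n, ENNReal.ofReal (Real.exp (-t * X (0 + j) ω)) with hFdef
    have hmeasF : Measurable F := by
      apply Finset.measurable_prod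
      intro j _
      exact ENNReal.measurable_ofReal.comp (Real.measurable_exp.comp ((hX (0 + j)).const_mul (-t)))
    set A : Set Ω := {ω | ∑ i ∈ Finset.range n, X i ω < (k : ℝ)} with hAdef
    have hptwise : ∀ ω ∈ A, ENNReal.ofReal (Real.exp (-t * k)) ≤ F ω := by
      intro ω hω
      have hF : F ω = ENNReal.ofReal (Real.exp (-t * ∑ i ∈ Finset.range n, X i ω)) := by
        show ∏ j ∈ Finset.range n, ENNReal.ofReal (Real.exp (-t * X (0 + j) ω))
          = ENNReal.ofReal (Real.exp (-t * ∑ i ∈ Finset.range n, X i ω))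
        rw [← ENNReal.ofReal_prod_of_nonneg (fun j _ => (Real.exp_pos _).le)]
        congr 1
        rw [← Real.exp_sum]
        congr 1
        rw [Finset.mul_sum]
        apply Finset.sum_congr rfl
        intro j _
        rw [zero_add]
      rw [hF]
      apply ENNReal.ofReal_le_ofReal
      apply Real.exp_le_exp.mpr
      have hS : ∑ i ∈ Finset.range n, X i ω ≤ (k : ℝ) := le_of_lt hω
      nlinarith
    have hmarkov : ENNReal.ofReal (Real.exp (-t * k)) * μ A ≤ ENNReal.ofReal q ^ n := by
      calc ENNReal.ofReal (Real.exp (-t * k)) * μ A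
          = ∫⁻ _ in A, ENNReal.ofReal (Real.exp (-t * k)) ∂μ := (setLIntegral_const _ _).symm
        _ ≤ ∫⁻ ω in A, F ω ∂μ := setLIntegral_mono hmeasF hptwise
        _ ≤ ∫⁻ ω, F ω ∂μ := setLIntegral_le_lintegral _ _
        _ ≤ ENNReal.ofReal q ^ n := hbound
    have hcancel : ENNReal.ofReal (Real.exp (t * k)) * ENNReal.ofReal (Real.exp (-t * k)) = 1 := by
      rw [← ENNReal.ofReal_mul (Real.exp_pos _).le, ← Real.exp_add]
      norm_num
    have hμA : μ A ≤ ENNReal.ofReal (Real.exp (t * k)) * ENNReal.ofReal q ^ n := by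
      calc μ A = (ENNReal.ofReal (Real.exp (t * k)) * ENNReal.ofReal (Real.exp (-t * k))) * μ A := by
            rw [hcancel, one_mul]
        _ = ENNReal.ofReal (Real.exp (t * k)) * (ENNReal.ofReal (Real.exp (-t * k)) * μ A) := by ring
        _ ≤ ENNReal.ofReal (Real.exp (t * k)) * ENNReal.ofReal q ^ n := by gcongr
    refine hμA.trans ?_
    rw [← ENNReal.ofReal_pow hq0, ← ENNReal.ofReal_mul (Real.exp_pos _).le]
    apply ENNReal.ofReal_le_ofReal
    -- real inequality
    have h2 : q ≤ Real.exp ((k:ℝ)/n - p) := by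
      have := Real.add_one_le_exp ((k:ℝ)/n - p)
      rw [hqval]; linarith
    have h3 : q ^ n ≤ Real.exp ((k:ℝ)/n - p) ^ n := pow_le_pow_left₀ hq0 h2 n
    have h4 : Real.exp ((k:ℝ)/n - p) ^ n = Real.exp ((k:ℝ) - n * p) := by
      rw [← Real.exp_nat_mul]
      congr 1
      field_simp
    have h5 : Real.exp (t * k) = (n * p / k) ^ k := by
      rw [mul_comm, Real.exp_nat_mul, hexpt]
    have h6 : (Real.exp 1 * n * p / k : ℝ) ^ k = Real.exp (k:ℝ) * (n * p / k) ^ k := by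
      rw [show (Real.exp 1 * n * p / k : ℝ) = Real.exp 1 * (n * p / k) by ring, mul_pow,
        ← Real.exp_nat_mul, mul_one]
    have h7 : Real.exp ((k:ℝ) - n * p) = Real.exp (k:ℝ) * Real.exp (-(n:ℝ) * p) := by
      rw [← Real.exp_add]; ring_nf
    calc Real.exp (t * k) * q ^ n
        ≤ (n * p / k) ^ k * Real.exp ((k:ℝ) - n * p) := by
          rw [h5]
          exact mul_le_mul_of_nonneg_left (h3.trans (le_of_eq h4)) (by positivity)
      _ = Real.exp (-(n : ℝ) * p) * (Real.exp 1 * n * p / k) ^ k := by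
          rw [h6, h7]; ring
end

section
/- Let (Δ_t)_{t=1}^T be a sequence of nonnegative reals, γ ∈ (0,1), β ∈ (γ^{d+2}, 1), and a, b ≥ 0 and t_c ≥ 1 be constants such that: (i) Δ_t ≤ a for all t < t_c; and (ii) Δ_t ≤ b ((1-β) t)^{-1/(d+2)} + γ max_{βt ≤ i < t} Δ_i for all t_c ≤ t ≤ T. Define C = max{ t_c^{1/(d+2)} a, b (1-β)^{-1/(d+2)} / (1 - γ β^{-1/(d+2)}) }. Then Δ_t ≤ C t^{-1/(d+2)} for all 1 ≤ t ≤ T. -/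
/-- Error-decay recursion for online nearest-neighbor Q-learning: if
`Δ_t ≤ a` for `t < t_c`, and for `t_c ≤ t ≤ T`,
`Δ_t ≤ b ((1-β) t)^{-1/(d+2)} + γ max_{βt ≤ i < t} Δ_i`,
then `Δ_t ≤ C t^{-1/(d+2)}` for all `1 ≤ t ≤ T`, where
`C = max{t_c^{1/(d+2)} a, b (1-β)^{-1/(d+2)} / (1 - γ β^{-1/(d+2)})}`. -/
theorem stmt13 (d T : ℕ) (hd : 1 ≤ d) (hT : 1 ≤ T)
    (γ β a b tc C : ℝ) (hγ : γ ∈ Set.Ioo (0:ℝ) 1)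
    (hβ1 : γ ^ (d + 2) < β) (hβ2 : β < 1)
    (ha : 0 ≤ a) (hb : 0 ≤ b) (htc : 1 ≤ tc)
    (Δ : ℕ → ℝ) (hΔnn : ∀ t : ℕ, 1 ≤ t → t ≤ T → 0 ≤ Δ t)
    (h1 : ∀ t : ℕ, 1 ≤ t → t ≤ T → (t : ℝ) < tc → Δ t ≤ a)
    (h2 : ∀ t : ℕ, t ≤ T → tc ≤ (t : ℝ) →
      Δ t ≤ b * Real.rpow ((1 - β) * (t : ℝ)) (-1 / ((d : ℝ) + 2))
        + γ * sSup {x : ℝ | ∃ i : ℕ, β * (t : ℝ) ≤ (i : ℝ) ∧ i < t ∧ x = Δ i})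
    (hC : C = max (Real.rpow tc (1 / ((d : ℝ) + 2)) * a)
        (b * Real.rpow (1 - β) (-1 / ((d : ℝ) + 2))
          / (1 - γ * Real.rpow β (-1 / ((d : ℝ) + 2))))) :
    ∀ t : ℕ, 1 ≤ t → t ≤ T → Δ t ≤ C * Real.rpow (t : ℝ) (-1 / ((d : ℝ) + 2)) := by
  have hrw : ∀ x y : ℝ, Real.rpow x y = x ^ y := fun _ _ => rfl
  simp only [hrw] at h2 hC ⊢
  set q : ℝ := 1 / ((d : ℝ) + 2) with hq
  have hd2 : (0:ℝ) < (d:ℝ) + 2 := by positivity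
  have hq0 : 0 < q := by rw [hq]; positivity
  have hnegq : -1 / ((d : ℝ) + 2) = -q := by rw [hq]; ring
  simp only [hnegq] at h2 hC ⊢
  have hγ0 : (0:ℝ) < γ := hγ.1
  have hγ1 : γ < 1 := hγ.2
  have hβ0 : (0:ℝ) < β := lt_trans (by positivity) hβ1
  have h1β : (0:ℝ) < 1 - β := by linarith
  have htc0 : (0:ℝ) < tc := by linarith
  have hγβ : γ < β ^ q := by
    have h := Real.rpow_lt_rpow (by positivity) hβ1 hq0
    rwa [← Real.rpow_natCast γ (d + 2), ← Real.rpow_mul hγ0.le,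
      show ((d + 2 : ℕ) : ℝ) * q = 1 by rw [hq]; push_cast; field_simp,
      Real.rpow_one] at h
  have hβq0 : (0:ℝ) < β ^ (-q : ℝ) := Real.rpow_pos_of_pos hβ0 _
  have hK : γ * β ^ (-q : ℝ) < 1 := by
    calc γ * β ^ (-q:ℝ) < β ^ (q:ℝ) * β ^ (-q:ℝ) := mul_lt_mul_of_pos_right hγβ hβq0
      _ = 1 := by rw [← Real.rpow_add hβ0]; simp
  have h1K : 0 < 1 - γ * β ^ (-q:ℝ) := by linarith
  have hC0 : 0 ≤ C := by
    rw [hC]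
    exact le_max_of_le_left (by positivity)
  have hCkey : b * (1 - β) ^ (-q:ℝ) + γ * (β ^ (-q:ℝ) * C) ≤ C := by
    have h := le_max_right (tc ^ q * a)
      (b * (1 - β) ^ (-q:ℝ) / (1 - γ * β ^ (-q:ℝ)))
    rw [← hC, div_le_iff₀ h1K] at h
    nlinarith [hβq0, hγ0]
  intro t
  induction t using Nat.strong_induction_on with
  | _ t ih =>
    intro ht1 htT
    have ht0 : (0:ℝ) < (t:ℝ) := by exact_mod_cast ht1
    have htq0 : (0:ℝ) ≤ (t:ℝ) ^ (-q:ℝ) := (Real.rpow_pos_of_pos ht0 _).le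
    by_cases hcase : (t:ℝ) < tc
    · have hΔa := h1 t ht1 htT hcase
      have hmono : tc ^ (-q:ℝ) ≤ (t:ℝ) ^ (-q:ℝ) :=
        Real.rpow_le_rpow_of_nonpos ht0 hcase.le (by linarith)
      calc Δ t ≤ a := hΔa
        _ = (tc ^ q * a) * tc ^ (-q:ℝ) := by
            rw [mul_comm (tc ^ q) a, mul_assoc, ← Real.rpow_add htc0]
            simp
        _ ≤ (tc ^ q * a) * (t:ℝ) ^ (-q:ℝ) :=
            mul_le_mul_of_nonneg_left hmono (by positivity)
        _ ≤ C * (t:ℝ) ^ (-q:ℝ) := by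
            apply mul_le_mul_of_nonneg_right _ htq0
            rw [hC]; exact le_max_left _ _
    · push_neg at hcase
      have hbt : (0:ℝ) < β * t := by positivity
      have hsup : sSup {x : ℝ | ∃ i : ℕ, β * (t : ℝ) ≤ (i : ℝ) ∧ i < t ∧ x = Δ i}
          ≤ C * (β * (t:ℝ)) ^ (-q:ℝ) := by
        apply Real.sSup_le _ (by positivity)
        rintro x ⟨i, hβi, hit, rfl⟩
        have hi0 : (0:ℝ) < (i:ℝ) := lt_of_lt_of_le hbt hβi
        have hi1 : 1 ≤ i := Nat.one_le_iff_ne_zero.mpr (by rintro rfl; simp at hi0)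
        have hiT : i ≤ T := le_trans (le_of_lt hit) htT
        have hih := ih i hit hi1 hiT
        have hmono : (i:ℝ) ^ (-q:ℝ) ≤ (β * (t:ℝ)) ^ (-q:ℝ) :=
          Real.rpow_le_rpow_of_nonpos hbt hβi (by linarith)
        exact le_trans hih (mul_le_mul_of_nonneg_left hmono hC0)
      have hmain := h2 t htT hcase
      have e1 : ((1 - β) * (t:ℝ)) ^ (-q:ℝ) = (1 - β) ^ (-q:ℝ) * (t:ℝ) ^ (-q:ℝ) :=
        Real.mul_rpow h1β.le ht0.le
      have e2 : (β * (t:ℝ)) ^ (-q:ℝ) = β ^ (-q:ℝ) * (t:ℝ) ^ (-q:ℝ) :=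
        Real.mul_rpow hβ0.le ht0.le
      calc Δ t ≤ b * ((1 - β) * (t:ℝ)) ^ (-q:ℝ)
            + γ * sSup {x : ℝ | ∃ i : ℕ, β * (t : ℝ) ≤ (i : ℝ) ∧ i < t ∧ x = Δ i} := hmain
        _ ≤ b * ((1 - β) * (t:ℝ)) ^ (-q:ℝ) + γ * (C * (β * (t:ℝ)) ^ (-q:ℝ)) := by
            exact add_le_add (le_refl _) (mul_le_mul_of_nonneg_left hsup hγ0.le)
        _ = (b * (1 - β) ^ (-q:ℝ) + γ * (β ^ (-q:ℝ) * C)) * (t:ℝ) ^ (-q:ℝ) := by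
            rw [e1, e2]; ring
        _ ≤ C * (t:ℝ) ^ (-q:ℝ) := mul_le_mul_of_nonneg_right hCkey htq0
end
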